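/- arXiv:2207.05918 — 6 statements merged into one kernel-verified Lean document; each statement's English description precedes it below -/
import Mathlib

section
/- Let A be an n×n real matrix and b a vector in ℝⁿ. A vector x ∈ ℝⁿ satisfies the absolute value equation Ax − |x| = b (where |x| denotes the componentwise absolute value) if and only if x satisfies the generalized linear complementarity conditions: (A+I)x − b ≥ 0 componentwise, (A−I)x − b ≥ 0 componentwise, and ⟨(A+I)x − b, (A−I)x − b⟩ = 0. -/
/-- For an `n × n` real matrix `A` and `b : ℝⁿ`, a vector `x` satisfies the
absolute value equation `A x - |x| = b` (componentwise absolute value) iff it satisfies the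
generalized linear complementarity conditions `(A + I) x - b ≥ 0`, `(A - I) x - b ≥ 0`
(componentwise) and `⟨(A + I) x - b, (A - I) x - b⟩ = 0` (Euclidean inner product). -/
theorem ave_iff_generalized_lcp (n : ℕ) (A : Matrix (Fin n) (Fin n) ℝ) (b x : Fin n → ℝ) :
    (A.mulVec x - (fun i => |x i|) = b) ↔
      ((∀ i, 0 ≤ ((A + 1).mulVec x - b) i) ∧
        (∀ i, 0 ≤ ((A - 1).mulVec x - b) i) ∧
        ∑ i, ((A + 1).mulVec x - b) i * ((A - 1).mulVec x - b) i = 0) := by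
  have hp : ∀ i, ((A + 1).mulVec x - b) i = A.mulVec x i + x i - b i := by
    intro i
    simp [Matrix.add_mulVec, Matrix.one_mulVec]
  have hq : ∀ i, ((A - 1).mulVec x - b) i = A.mulVec x i - x i - b i := by
    intro i
    simp [Matrix.sub_mulVec, Matrix.one_mulVec]
  constructor
  · intro h
    have hi : ∀ i, A.mulVec x i - |x i| = b i := fun i => congrFun h i
    refine ⟨fun i => ?_, fun i => ?_, ?_⟩
    · rw [hp]; have := hi i; cases abs_cases (x i) <;> linarith [abs_nonneg (x i), le_abs_self (x i), neg_abs_le (x i)]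
    · rw [hq]; have := hi i; linarith [le_abs_self (x i)]
    · refine Finset.sum_eq_zero fun i _ => ?_
      rw [hp, hq]
      have := hi i
      have hx : A.mulVec x i - b i = |x i| := by linarith
      rw [show A.mulVec x i + x i - b i = |x i| + x i by linarith,
          show A.mulVec x i - x i - b i = |x i| - x i by linarith]
      cases abs_cases (x i) with
      | inl h => rw [h.1]; ring
      | inr h => rw [h.1]; ring
  · rintro ⟨h1, h2, h3⟩
    have hz : ∀ i, ((A + 1).mulVec x - b) i * ((A - 1).mulVec x - b) i = 0 := by
      intro i
      have := Finset.sum_eq_zero_iff_of_nonneg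
        (fun j _ => mul_nonneg (h1 j) (h2 j)) |>.mp h3 i (Finset.mem_univ i)
      exact this
    funext i
    have hzi := hz i
    rw [hp i, hq i] at hzi
    have h1i := h1 i; have h2i := h2 i
    rw [hp i] at h1i; rw [hq i] at h2i
    simp only [Pi.sub_apply]
    rcases mul_eq_zero.mp hzi with h | h
    · have hx : x i ≤ 0 := by linarith
      rw [abs_of_nonpos hx]; linarith
    · have hx : 0 ≤ x i := by linarith
      rw [abs_of_nonneg hx]; linarith
end

section
/- Let A be an n×n real matrix and b a vector in ℝⁿ, and let S = {x ∈ ℝⁿ : (A+I)x − b ≥ 0 and (A−I)x − b ≥ 0} be the feasible set of the associated bilinear program. Then for every x ∈ S the bilinear objective ⟨(A+I)x − b, (A−I)x − b⟩ is nonnegative, and a feasible point x ∈ S attains objective value 0 if and only if x solves the absolute value equation Ax − |x| = b. -/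
/-- For an `n × n` real matrix `A` and `b : ℝⁿ`, on the feasible set
`S = {x | (A+I)x - b ≥ 0 ∧ (A-I)x - b ≥ 0}` of the associated bilinear program, the bilinear
objective `⟨(A+I)x - b, (A-I)x - b⟩` is nonnegative, and a feasible `x` attains the value `0`
iff `x` solves the absolute value equation `A x - |x| = b`. -/
theorem bilinear_program_nonneg_and_zero_iff_ave (n : ℕ)
    (A : Matrix (Fin n) (Fin n) ℝ) (b : Fin n → ℝ) (S : Set (Fin n → ℝ))
    (hS : S = {x | (∀ i, 0 ≤ ((A + 1).mulVec x - b) i) ∧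
      (∀ i, 0 ≤ ((A - 1).mulVec x - b) i)}) :
    ∀ x ∈ S,
      0 ≤ ∑ i, ((A + 1).mulVec x - b) i * ((A - 1).mulVec x - b) i ∧
      ((∑ i, ((A + 1).mulVec x - b) i * ((A - 1).mulVec x - b) i = 0) ↔
        A.mulVec x - (fun i => |x i|) = b) := by
  subst hS
  rintro x ⟨h1, h2⟩
  have hnn : ∀ i ∈ Finset.univ,
      0 ≤ ((A + 1).mulVec x - b) i * ((A - 1).mulVec x - b) i :=
    fun i _ => mul_nonneg (h1 i) (h2 i)
  refine ⟨Finset.sum_nonneg hnn, ?_⟩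
  rw [Finset.sum_eq_zero_iff_of_nonneg hnn]
  constructor
  · intro h
    funext i
    have h1i := h1 i
    have h2i := h2 i
    have hi := h i (Finset.mem_univ i)
    simp only [Matrix.add_mulVec, Matrix.sub_mulVec, Matrix.one_mulVec,
      Pi.sub_apply, Pi.add_apply] at h1i h2i hi ⊢
    rcases abs_cases (x i) with ⟨ha, _⟩ | ⟨ha, _⟩ <;> rw [ha] <;> nlinarith
  · intro h i _
    have hi := congrFun h i
    have h1i := h1 i
    have h2i := h2 i
    simp only [Matrix.add_mulVec, Matrix.sub_mulVec, Matrix.one_mulVec,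
      Pi.sub_apply, Pi.add_apply] at h1i h2i hi ⊢
    rcases abs_cases (x i) with ⟨ha, _⟩ | ⟨ha, _⟩ <;> rw [ha] at hi <;> nlinarith
end

section
/- Let Ω be a nonempty set, and for each ω ∈ Ω let A(ω) be an n×n real matrix and b(ω) a vector in ℝⁿ. A vector x ∈ ℝⁿ satisfies the stochastic absolute value equations A(ω)x − |x| = b(ω) for every ω ∈ Ω if and only if for every ω ∈ Ω it satisfies (A(ω)+I)x − b(ω) ≥ 0, (A(ω)−I)x − b(ω) ≥ 0, and ⟨(A(ω)+I)x − b(ω), (A(ω)−I)x − b(ω)⟩ = 0. -/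
/-- Let `Ω` be a nonempty set and for each `ω ∈ Ω` let `A ω` be an `n × n`
real matrix and `b ω ∈ ℝⁿ`. A vector `x` satisfies the stochastic absolute value equations
`A(ω) x - |x| = b(ω)` for every `ω` iff for every `ω` it satisfies
`(A(ω)+I)x - b(ω) ≥ 0`, `(A(ω)-I)x - b(ω) ≥ 0` and
`⟨(A(ω)+I)x - b(ω), (A(ω)-I)x - b(ω)⟩ = 0`. -/
theorem save_iff_stochastic_generalized_lcp (n : ℕ) (Ω : Type*) [Nonempty Ω]
    (A : Ω → Matrix (Fin n) (Fin n) ℝ) (b : Ω → Fin n → ℝ) (x : Fin n → ℝ) :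
    (∀ ω : Ω, (A ω).mulVec x - (fun i => |x i|) = b ω) ↔
      (∀ ω : Ω,
        (∀ i, 0 ≤ ((A ω + 1).mulVec x - b ω) i) ∧
        (∀ i, 0 ≤ ((A ω - 1).mulVec x - b ω) i) ∧
        ∑ i, ((A ω + 1).mulVec x - b ω) i * ((A ω - 1).mulVec x - b ω) i = 0) := by
  constructor
  · intro h ω
    have hx : ∀ i, (A ω).mulVec x i - |x i| = b ω i := fun i => congrFun (h ω) i
    have hp : ∀ i, ((A ω + 1).mulVec x - b ω) i = |x i| + x i := by
      intro i
      have := hx i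
      simp only [Matrix.add_mulVec, Matrix.one_mulVec, Pi.sub_apply, Pi.add_apply]
      linarith
    have hm : ∀ i, ((A ω - 1).mulVec x - b ω) i = |x i| - x i := by
      intro i
      have := hx i
      simp only [Matrix.sub_mulVec, Matrix.one_mulVec, Pi.sub_apply]
      linarith
    refine ⟨fun i => by rw [hp]; have := neg_abs_le (x i); linarith,
      fun i => by rw [hm]; have := le_abs_self (x i); linarith, ?_⟩
    rw [Finset.sum_eq_zero]
    intro i _
    rw [hp, hm]
    nlinarith [sq_abs (x i)]
  · intro h ω
    obtain ⟨h1, h2, h3⟩ := h ω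
    funext i
    have hz : ((A ω + 1).mulVec x - b ω) i * ((A ω - 1).mulVec x - b ω) i = 0 :=
      (Finset.sum_eq_zero_iff_of_nonneg (fun j _ => mul_nonneg (h1 j) (h2 j))).mp h3 i
        (Finset.mem_univ i)
    have hu : ((A ω + 1).mulVec x - b ω) i = (A ω).mulVec x i + x i - b ω i := by
      simp only [Matrix.add_mulVec, Matrix.one_mulVec, Pi.sub_apply, Pi.add_apply]
    have hv : ((A ω - 1).mulVec x - b ω) i = (A ω).mulVec x i - x i - b ω i := by
      simp only [Matrix.sub_mulVec, Matrix.one_mulVec, Pi.sub_apply]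
    have h1i := h1 i; have h2i := h2 i
    rw [hu] at h1i hz; rw [hv] at h2i hz
    simp only [Pi.sub_apply]
    rcases mul_eq_zero.mp hz with h0 | h0
    · have hxi : x i ≤ 0 := by linarith
      rw [abs_of_nonpos hxi]; linarith
    · have hxi : 0 ≤ x i := by linarith
      rw [abs_of_nonneg hxi]; linarith
end

section
/- Let A be an n×n real matrix and b ∈ ℝⁿ. Suppose that A − D is nonsingular for every n×n diagonal matrix D whose diagonal entries all lie in {−1, +1}. Then the map g(x) = Ax − |x| − b is coercive in norm: for every sequence (x_k) in ℝⁿ with ‖x_k‖ → ∞ one has ‖A x_k − |x_k| − b‖ → ∞; equivalently, for every γ > 0 the set {x ∈ ℝⁿ : ‖Ax − |x| − b‖ ≤ γ} is bounded. -/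
open Filter Matrix

/-- If `A - D` is nonsingular for every diagonal matrix `D` with diagonal
entries in `{-1, +1}`, then `g(x) = A x - |x| - b` is norm-coercive: `‖x_k‖ → ∞` implies
`‖g(x_k)‖ → ∞`; equivalently, every level set `{x : ‖A x - |x| - b‖ ≤ γ}` (γ > 0) is bounded.
Norms are Euclidean. -/
theorem ave_residual_coercive (n : ℕ) (A : Matrix (Fin n) (Fin n) ℝ)
    (b : EuclideanSpace ℝ (Fin n))
    (hA : ∀ s : Fin n → ℝ, (∀ i, s i = 1 ∨ s i = -1) → IsUnit (A - Matrix.diagonal s))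
    (g : EuclideanSpace ℝ (Fin n) → EuclideanSpace ℝ (Fin n))
    (hg : g = fun x => Matrix.toEuclideanLin A x -
      (WithLp.equiv 2 (Fin n → ℝ)).symm (fun i => |x i|) - b) :
    (∀ x : ℕ → EuclideanSpace ℝ (Fin n),
      Tendsto (fun k => ‖x k‖) atTop atTop → Tendsto (fun k => ‖g (x k)‖) atTop atTop) ∧
    (∀ γ : ℝ, 0 < γ → Bornology.IsBounded {x : EuclideanSpace ℝ (Fin n) | ‖g x‖ ≤ γ}) := by
  classical
  set h : EuclideanSpace ℝ (Fin n) → EuclideanSpace ℝ (Fin n) :=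
    fun x => Matrix.toEuclideanLin A x -
      (WithLp.equiv 2 (Fin n → ℝ)).symm (fun i => |x i|) with hh
  have hgx : ∀ x, g x = h x - b := by intro x; rw [hg]
  -- h vanishes only at 0
  have hzero : ∀ x : EuclideanSpace ℝ (Fin n), h x = 0 → x = 0 := by
    intro x hx
    set s : Fin n → ℝ := fun i => if 0 ≤ x i then 1 else -1 with hs
    have hs1 : ∀ i, s i = 1 ∨ s i = -1 := fun i => by
      by_cases h0 : 0 ≤ x i <;> simp [hs, h0]
    have habs : ∀ i, |x i| = s i * x i := by
      intro i; by_cases h0 : 0 ≤ x i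
      · simp [hs, h0, abs_of_nonneg h0]
      · simp [hs, h0, abs_of_neg (lt_of_not_ge h0)]
    have hx' : (A - Matrix.diagonal s) *ᵥ (WithLp.equiv 2 (Fin n → ℝ) x) = 0 := by
      have hx2 := hx
      rw [hh] at hx2
      simp only at hx2
      rw [Matrix.toEuclideanLin_apply, sub_eq_zero] at hx2
      have h2 := congrArg (WithLp.equiv 2 (Fin n → ℝ)) hx2
      simp only [Equiv.apply_symm_apply] at h2
      funext i
      have h3 : (A *ᵥ (WithLp.equiv 2 (Fin n → ℝ)) x) i = |x i| := by
        exact congrFun h2 i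
      rw [Matrix.sub_mulVec]
      simp only [Pi.sub_apply, Pi.zero_apply, h3, Matrix.mulVec_diagonal]
      have h4 : (WithLp.equiv 2 (Fin n → ℝ)) x i = x i := rfl
      rw [h4, habs i, sub_self]
    obtain ⟨u, hu⟩ := hA s hs1
    have hx0 : (WithLp.equiv 2 (Fin n → ℝ) x) = 0 := by
      have h1 : ((u⁻¹ : (Matrix (Fin n) (Fin n) ℝ)ˣ) : Matrix (Fin n) (Fin n) ℝ) *ᵥ
          ((A - Matrix.diagonal s) *ᵥ (WithLp.equiv 2 (Fin n → ℝ) x)) = 0 := by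
        rw [hx', Matrix.mulVec_zero]
      rw [Matrix.mulVec_mulVec, ← hu] at h1
      rwa [u.inv_mul, Matrix.one_mulVec] at h1
    exact (WithLp.equiv 2 (Fin n → ℝ)).injective (by simpa using hx0)
  -- continuity of h
  have hcont : Continuous h := by
    rw [hh]
    apply Continuous.sub
    · exact LinearMap.continuous_of_finiteDimensional _
    · refine Continuous.comp (PiLp.continuous_toLp 2 (fun _ : Fin n => ℝ)) ?_
      refine continuous_pi fun i => ?_
      exact continuous_abs.comp ((continuous_apply i).comp
        (PiLp.continuous_ofLp 2 (fun _ : Fin n => ℝ)))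
  -- positive homogeneity
  have hhom : ∀ (t : ℝ), 0 ≤ t → ∀ x, h (t • x) = t • h x := by
    intro t ht x
    have e1 : Matrix.toEuclideanLin A (t • x) = t • Matrix.toEuclideanLin A x :=
      (Matrix.toEuclideanLin A).map_smul t x
    have e2 : (WithLp.equiv 2 (Fin n → ℝ)).symm (fun i => |(t • x) i|)
        = t • (WithLp.equiv 2 (Fin n → ℝ)).symm (fun i => |x i|) := by
      show WithLp.toLp 2 (fun i => |(t • x) i|) = t • WithLp.toLp 2 (fun i => |x i|)
      rw [← WithLp.toLp_smul]
      congr 1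
      funext i
      have h5 : (t • x) i = t * x i := rfl
      have h6 : (t • fun i => |x i|) i = t * |x i| := rfl
      change |(t • x) i| = (t • fun i => |x i|) i
      rw [h5, h6, abs_mul, abs_of_nonneg ht]
    rw [hh]
    simp only
    rw [e1, e2, smul_sub]
  -- key coercivity bound
  have key : ∃ c : ℝ, 0 < c ∧ ∀ x : EuclideanSpace ℝ (Fin n), c * ‖x‖ ≤ ‖h x‖ := by
    rcases Nat.eq_zero_or_pos n with hn | hn
    · refine ⟨1, one_pos, fun x => ?_⟩
      subst hn
      have hx0 : x = 0 := Subsingleton.elim _ _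
      simp [hx0]
    · haveI : Nonempty (Fin n) := ⟨⟨0, hn⟩⟩
      have hsph : (Metric.sphere (0 : EuclideanSpace ℝ (Fin n)) 1).Nonempty :=
        NormedSpace.sphere_nonempty.mpr zero_le_one
      obtain ⟨z, hz, hmin⟩ := (isCompact_sphere (0 : EuclideanSpace ℝ (Fin n)) 1).exists_isMinOn
        hsph (hcont.norm.continuousOn)
      have hz1 : ‖z‖ = 1 := by simpa using hz
      have hzne : z ≠ 0 := by intro h0; rw [h0] at hz1; simp at hz1
      have hc : 0 < ‖h z‖ := by
        rcases (norm_pos_iff (E := EuclideanSpace ℝ (Fin n))).mpr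
          (fun h0 => hzne (hzero z h0)) with hp
        · exact hp
      refine ⟨‖h z‖, hc, fun x => ?_⟩
      rcases eq_or_ne x 0 with rfl | hxne
      · simp
      · have hnx : 0 < ‖x‖ := norm_pos_iff.mpr hxne
        set u : EuclideanSpace ℝ (Fin n) := ‖x‖⁻¹ • x with hu
        have hu1 : u ∈ Metric.sphere (0 : EuclideanSpace ℝ (Fin n)) 1 := by
          simp [hu, norm_smul, abs_of_pos (inv_pos.mpr hnx), inv_mul_cancel₀ hnx.ne']
        have hxu : x = ‖x‖ • u := by
          rw [hu, smul_smul, mul_inv_cancel₀ hnx.ne', one_smul]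
        have hhx : ‖h x‖ = ‖x‖ * ‖h u‖ := by
          conv_lhs => rw [hxu]
          rw [hhom ‖x‖ (norm_nonneg x) u, norm_smul, Real.norm_eq_abs, abs_of_pos hnx]
        rw [hhx, mul_comm]
        have hle : ‖h z‖ ≤ ‖h u‖ := hmin hu1
        exact mul_le_mul_of_nonneg_left hle (norm_nonneg x)
  obtain ⟨c, hc, hcle⟩ := key
  have hlow : ∀ x, c * ‖x‖ - ‖b‖ ≤ ‖g x‖ := by
    intro x
    rw [hgx]
    calc c * ‖x‖ - ‖b‖ ≤ ‖h x‖ - ‖b‖ := by linarith [hcle x]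
      _ ≤ ‖h x - b‖ := by
          have := norm_sub_norm_le (h x) b
          linarith [this]
  constructor
  · intro x hx
    refine tendsto_atTop_mono (fun k => hlow (x k)) ?_
    exact tendsto_atTop_add_const_right _ (-‖b‖) (hx.const_mul_atTop hc) |>.congr
      (fun k => by ring)
  · intro γ hγ
    refine (Metric.isBounded_closedBall (x := (0 : EuclideanSpace ℝ (Fin n)))
      (r := (γ + ‖b‖) / c)).subset ?_
    intro x hx
    simp only [Set.mem_setOf_eq] at hx
    have h1 : c * ‖x‖ ≤ γ + ‖b‖ := by linarith [hlow x]
    have h2 : ‖x‖ ≤ (γ + ‖b‖) / c := by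
      rw [le_div_iff₀ hc]; linarith
    simpa [Metric.mem_closedBall] using h2
end

section
/- Let f : ℝⁿ → ℝ be continuously differentiable and bounded below, and let δ, ρ ∈ (0,1). Let (x_k) be a sequence in ℝⁿ generated by the gradient method with Armijo backtracking: d_k = −∇f(x_k), α_k = max{ρ^j : j = 0,1,2,… and f(x_k + ρ^j d_k) − f(x_k) ≤ δ ρ^j ⟨∇f(x_k), d_k⟩}, and x_{k+1} = x_k + α_k d_k, where each x_k satisfies ∇f(x_k) ≠ 0 so the step is defined. If the sequence (x_k) converges to a point x*, then ∇f(x*) = 0. -/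
open Filter
open scoped RealInnerProductSpace

/-- Let `f` be continuously differentiable and bounded below, and let
`(x_k)` be generated by the gradient method with Armijo backtracking:
`d_k = -∇f(x_k)`, `α_k = max{ρʲ : f(x_k + ρʲ d_k) - f(x_k) ≤ δ ρʲ ⟨∇f(x_k), d_k⟩}`,
`x_{k+1} = x_k + α_k d_k`, with `∇f(x_k) ≠ 0` for all `k`.  If `x_k → x*`, then `∇f(x*) = 0`. -/
theorem gradient_method_armijo_stationary_limit (n : ℕ)
    (f : EuclideanSpace ℝ (Fin n) → ℝ) (hf : ContDiff ℝ 1 f)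
    (hbdd : BddBelow (Set.range f))
    (δ ρ : ℝ) (hδ : δ ∈ Set.Ioo (0:ℝ) 1) (hρ : ρ ∈ Set.Ioo (0:ℝ) 1)
    (x : ℕ → EuclideanSpace ℝ (Fin n)) (α : ℕ → ℝ)
    (hgrad_ne : ∀ k, gradient f (x k) ≠ 0)
    (hα_mem : ∀ k, ∃ j : ℕ, α k = ρ ^ j ∧
      f (x k + ρ ^ j • (-(gradient f (x k)))) - f (x k) ≤
        δ * ρ ^ j * ⟪gradient f (x k), -(gradient f (x k))⟫)
    (hα_max : ∀ k, ∀ j : ℕ,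
      (f (x k + ρ ^ j • (-(gradient f (x k)))) - f (x k) ≤
        δ * ρ ^ j * ⟪gradient f (x k), -(gradient f (x k))⟫) → ρ ^ j ≤ α k)
    (hstep : ∀ k, x (k + 1) = x k + α k • (-(gradient f (x k))))
    (xstar : EuclideanSpace ℝ (Fin n)) (hconv : Tendsto x atTop (nhds xstar)) :
    gradient f xstar = 0 := by
  obtain ⟨hδ0, hδ1⟩ := hδ
  obtain ⟨hρ0, hρ1⟩ := hρ
  by_contra hne
  set g : ℕ → EuclideanSpace ℝ (Fin n) := fun k => gradient f (x k) with hg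
  set gs := gradient f xstar with hgs
  have hdiff : ∀ y, DifferentiableAt ℝ f y := fun y =>
    (hf.differentiable one_ne_zero).differentiableAt
  have hgradcont : Continuous (fun y => gradient f y) := by
    have h1 : Continuous (fderiv ℝ f) := hf.continuous_fderiv one_ne_zero
    exact ((InnerProductSpace.toDual ℝ _).symm.continuous.comp h1 : _)
  have hfderiv : ∀ y v, fderiv ℝ f y v = ⟪gradient f y, v⟫ := by
    intro y v
    have h := (hdiff y).hasGradientAt
    rw [hasGradientAt_iff_hasFDerivAt] at h
    rw [h.fderiv]
    exact InnerProductSpace.toDual_apply_apply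
  -- limits of the basic sequences
  have hgt : Tendsto g atTop (nhds gs) := (hgradcont.tendsto xstar).comp hconv
  have hft : Tendsto (fun k => f (x k)) atTop (nhds (f xstar)) :=
    (hf.continuous.tendsto xstar).comp hconv
  have hgs_pos : (0:ℝ) < ‖gs‖ ^ 2 := pow_pos (norm_pos_iff.mpr hne) 2
  have hnormt : Tendsto (fun k => ‖g k‖ ^ 2) atTop (nhds (‖gs‖ ^ 2)) :=
    ((continuous_norm.tendsto gs).comp hgt).pow 2
  -- α k positive and bounded above, and the Armijo decrease
  have hαpos : ∀ k, 0 < α k := by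
    intro k
    obtain ⟨j, hj, -⟩ := hα_mem k
    rw [hj]; positivity
  have hdec : ∀ k, δ * α k * ‖g k‖ ^ 2 ≤ f (x k) - f (x (k + 1)) := by
    intro k
    obtain ⟨j, hj, harm⟩ := hα_mem k
    rw [hstep k, hj]
    have : ⟪g k, -(g k)⟫ = -(‖g k‖ ^ 2) := by
      rw [inner_neg_right, real_inner_self_eq_norm_sq]
    rw [this] at harm
    nlinarith [harm]
  -- δ * α k * ‖g k‖² → 0 by squeeze
  have hdiff0 : Tendsto (fun k => f (x k) - f (x (k + 1))) atTop (nhds 0) := by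
    have h2 : Tendsto (fun k => f (x (k + 1))) atTop (nhds (f xstar)) :=
      hft.comp (tendsto_add_atTop_nat 1)
    simpa using hft.sub h2
  have hsq : Tendsto (fun k => δ * α k * ‖g k‖ ^ 2) atTop (nhds 0) := by
    apply squeeze_zero (fun k => by have h1 := (hαpos k).le; positivity) hdec hdiff0
  -- hence α → 0
  have hαt : Tendsto α atTop (nhds 0) := by
    have hden : Tendsto (fun k => δ * ‖g k‖ ^ 2) atTop (nhds (δ * ‖gs‖ ^ 2)) :=
      (tendsto_const_nhds.mul hnormt)
    have hden_ne : δ * ‖gs‖ ^ 2 ≠ 0 := ne_of_gt (mul_pos hδ0 hgs_pos)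
    have hq := hsq.div hden hden_ne
    rw [zero_div] at hq
    refine hq.congr fun k => ?_
    have hgk : ‖g k‖ ^ 2 ≠ 0 := pow_ne_zero 2 (norm_ne_zero_iff.mpr (hgrad_ne k))
    show δ * α k * ‖g k‖ ^ 2 / (δ * ‖g k‖ ^ 2) = α k
    field_simp
    rw [mul_div_cancel_right₀ _ (norm_ne_zero_iff.mpr (hgrad_ne k) : ‖g k‖ ≠ 0)]
  -- eventually α k < 1, giving the failed Armijo step at α k / ρ
  have hαlt1 : ∀ᶠ k in atTop, α k < 1 := hαt.eventually_lt_const one_pos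
  have key : ∀ᶠ k in atTop, ∃ y, dist y (x k) ≤ (α k / ρ) * ‖g k‖ ∧
      ⟪gradient f y, g k⟫ < δ * ‖g k‖ ^ 2 := by
    filter_upwards [hαlt1] with k hk1
    obtain ⟨j, hj, -⟩ := hα_mem k
    have hj1 : 1 ≤ j := by
      by_contra h
      interval_cases j
      · simp [hj] at hk1
    set β := ρ ^ (j - 1) with hβ
    have hβpos : 0 < β := by positivity
    have hβeq : β = α k / ρ := by
      rw [hj, hβ]
      rw [eq_div_iff (ne_of_gt hρ0), ← pow_succ]
      congr 1
      omega
    have hfail : ¬ (f (x k + β • (-(g k))) - f (x k) ≤ δ * β * ⟪g k, -(g k)⟫) := by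
      intro hcon
      have := hα_max k (j - 1) hcon
      rw [hj] at this
      have hlt : ρ ^ j < ρ ^ (j - 1) := by
        apply pow_lt_pow_right_of_lt_one₀ hρ0 hρ1
        omega
      linarith
    push_neg at hfail
    rw [show ⟪g k, -(g k)⟫ = -(‖g k‖ ^ 2) by
      rw [inner_neg_right, real_inner_self_eq_norm_sq]] at hfail
    -- Mean value theorem on φ t = f (x k + t • (-(g k)))
    set d := -(g k) with hd
    set φ : ℝ → ℝ := fun t => f (x k + t • d) with hφ
    have hline : ∀ t : ℝ, HasDerivAt (fun s : ℝ => x k + s • d) d t := by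
      intro t
      simpa using ((hasDerivAt_id t).smul_const d).const_add (x k)
    have hφd : ∀ t : ℝ, HasDerivAt φ ⟪gradient f (x k + t • d), d⟫ t := by
      intro t
      have hfd := (hdiff (x k + t • d)).hasFDerivAt
      have := hfd.comp_hasDerivAt t (hline t)
      rw [hfderiv] at this; exact this
    have hcont : ContinuousOn φ (Set.Icc 0 β) :=
      (hf.continuous.comp (continuous_const.add (continuous_id.smul continuous_const))).continuousOn
    obtain ⟨c, hc, hceq⟩ := exists_hasDerivAt_eq_slope φ
      (fun t => ⟪gradient f (x k + t • d), d⟫) hβpos hcont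
      (fun t _ => hφd t)
    refine ⟨x k + c • d, ?_, ?_⟩
    · rw [dist_eq_norm]
      simp only [add_sub_cancel_left]
      rw [norm_smul, hd, norm_neg]
      rw [← hβeq]
      have : |c| ≤ β := by
        rw [abs_of_pos hc.1]; exact le_of_lt hc.2
      calc ‖c‖ * ‖g k‖ ≤ β * ‖g k‖ := by
            apply mul_le_mul_of_nonneg_right _ (norm_nonneg _)
            simpa [Real.norm_eq_abs] using this
        _ = β * ‖g k‖ := rfl
    · have hslope : ⟪gradient f (x k + c • d), d⟫ = (φ β - φ 0) / β := by
        simpa using hceq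
      have hφ0 : φ 0 = f (x k) := by simp [hφ]
      have hφβ : φ β = f (x k + β • d) := rfl
      have hgt' : (φ β - φ 0) / β > -(δ * ‖g k‖ ^ 2) := by
        rw [hφ0, hφβ, gt_iff_lt, lt_div_iff₀ hβpos]
        nlinarith [hfail]
      have : ⟪gradient f (x k + c • d), d⟫ > -(δ * ‖g k‖ ^ 2) := by
        rw [hslope]; exact hgt'
      rw [hd, inner_neg_right] at this
      linarith
  -- extract the sequence ξ and pass to the limit
  classical
  set P : ℕ → EuclideanSpace ℝ (Fin n) → Prop := fun k y =>
    dist y (x k) ≤ (α k / ρ) * ‖g k‖ ∧ ⟪gradient f y, g k⟫ < δ * ‖g k‖ ^ 2 with hP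
  set ξ : ℕ → EuclideanSpace ℝ (Fin n) := fun k =>
    if h : ∃ y, P k y then h.choose else x k with hξ
  have hξP : ∀ᶠ k in atTop, P k (ξ k) := by
    filter_upwards [key] with k hk
    rw [hξ]
    simp only [dif_pos hk]
    rw [dif_pos hk]; exact hk.choose_spec
  have hbound : Tendsto (fun k => (α k / ρ) * ‖g k‖) atTop (nhds 0) := by
    have h1 : Tendsto (fun k => α k / ρ) atTop (nhds 0) := by
      simpa using hαt.div_const ρ
    simpa using h1.mul ((continuous_norm.tendsto gs).comp hgt)
  have hξt : Tendsto ξ atTop (nhds xstar) := by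
    rw [tendsto_iff_dist_tendsto_zero]
    apply squeeze_zero' (Eventually.of_forall fun k => dist_nonneg)
    · filter_upwards [hξP] with k hk
      calc dist (ξ k) xstar ≤ dist (ξ k) (x k) + dist (x k) xstar := dist_triangle _ _ _
        _ ≤ (α k / ρ) * ‖g k‖ + dist (x k) xstar := by linarith [hk.1]
    · have h2 : Tendsto (fun k => dist (x k) xstar) atTop (nhds 0) :=
        tendsto_iff_dist_tendsto_zero.mp hconv
      simpa using hbound.add h2
  have hinner : Tendsto (fun k => ⟪gradient f (ξ k), g k⟫) atTop (nhds ⟪gs, gs⟫) := by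
    have h1 : Tendsto (fun k => gradient f (ξ k)) atTop (nhds gs) :=
      (hgradcont.tendsto xstar).comp hξt
    exact h1.inner hgt
  have hle : ⟪gs, gs⟫ ≤ δ * ‖gs‖ ^ 2 := by
    have h2 : Tendsto (fun k => δ * ‖g k‖ ^ 2) atTop (nhds (δ * ‖gs‖ ^ 2)) :=
      tendsto_const_nhds.mul hnormt
    refine le_of_tendsto_of_tendsto hinner h2 ?_
    filter_upwards [hξP] with k hk
    exact le_of_lt hk.2
  rw [real_inner_self_eq_norm_sq] at hle
  nlinarith
end

section
/- Let f̃ : ℝⁿ × ℝ → ℝ be such that f̃(·, μ) is continuously differentiable in x for every μ > 0, and let σ, γ̄ ∈ (0,1) and μ₀ > 0. Let (x_k) in ℝⁿ and (μ_k) in ℝ be sequences with the smoothing update rule: μ_{k+1} = μ_k if ‖∇_x f̃(x_{k+1}, μ_k)‖ ≥ γ̄ μ_k, and μ_{k+1} = σ μ_k otherwise. Assume the inner iteration has the property that for every μ̄ > 0, if μ_k = μ̄ for all sufficiently large k then lim_{k→∞} ‖∇_x f̃(x_k, μ̄)‖ = 0. Then the index set K = {k : μ_{k+1} = σ μ_k}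 is infinite, μ_k → 0 as k → ∞, and along K one has lim ‖∇_x f̃(x_{k+1}, μ_k)‖ = 0 (for k ∈ K, k → ∞). -/
open Filter

/-- Smoothing gradient method: with update rule `μ_{k+1} = μ_k` if
`‖∇_x f̃(x_{k+1}, μ_k)‖ ≥ γ̄ μ_k` and `μ_{k+1} = σ μ_k` otherwise, and assuming the inner
iteration drives the gradient to zero whenever `μ_k` is eventually constant at a positive
value, the set `K = {k : μ_{k+1} = σ μ_k}` is infinite, `μ_k → 0`, and
`‖∇_x f̃(x_{k+1}, μ_k)‖ → 0` along `K`. -/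
theorem smoothing_gradient_parameter_update (n : ℕ)
    (ftil : EuclideanSpace ℝ (Fin n) → ℝ → ℝ)
    (hsmooth : ∀ μ : ℝ, 0 < μ → ContDiff ℝ 1 (fun y => ftil y μ))
    (σ γbar : ℝ) (hσ : σ ∈ Set.Ioo (0:ℝ) 1) (hγ : γbar ∈ Set.Ioo (0:ℝ) 1)
    (μ : ℕ → ℝ) (x : ℕ → EuclideanSpace ℝ (Fin n)) (hμ0 : 0 < μ 0)
    (hupdate : ∀ k : ℕ,
      (γbar * μ k ≤ ‖gradient (fun y => ftil y (μ k)) (x (k + 1))‖ → μ (k + 1) = μ k) ∧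
      (‖gradient (fun y => ftil y (μ k)) (x (k + 1))‖ < γbar * μ k → μ (k + 1) = σ * μ k))
    (hinner : ∀ μbar : ℝ, 0 < μbar → (∀ᶠ k in atTop, μ k = μbar) →
      Tendsto (fun k => ‖gradient (fun y => ftil y μbar) (x k)‖) atTop (nhds 0)) :
    {k : ℕ | μ (k + 1) = σ * μ k}.Infinite ∧
    Tendsto μ atTop (nhds 0) ∧
    Tendsto (fun k => ‖gradient (fun y => ftil y (μ k)) (x (k + 1))‖)
      (atTop ⊓ Filter.principal {k : ℕ | μ (k + 1) = σ * μ k}) (nhds 0) := by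
  obtain ⟨hσ0, hσ1⟩ := hσ
  obtain ⟨hγ0, hγ1⟩ := hγ
  -- step alternatives
  have hstep : ∀ k, μ (k+1) = μ k ∨ μ (k+1) = σ * μ k := by
    intro k
    rcases le_or_gt (γbar * μ k) ‖gradient (fun y => ftil y (μ k)) (x (k + 1))‖ with h | h
    · exact Or.inl ((hupdate k).1 h)
    · exact Or.inr ((hupdate k).2 h)
  have hpos : ∀ k, 0 < μ k := by
    intro k
    induction k with
    | zero => exact hμ0
    | succ m ih =>
      rcases hstep m with h | h
      · rwa [h]
      · rw [h]; positivity
  have hanti : Antitone μ := by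
    apply antitone_nat_of_succ_le
    intro k
    rcases hstep k with h | h
    · exact h.le
    · rw [h]; nlinarith [hpos k]
  -- if k ∈ K then gradient norm is small
  have hK : ∀ k, μ (k+1) = σ * μ k →
      ‖gradient (fun y => ftil y (μ k)) (x (k + 1))‖ < γbar * μ k := by
    intro k hk
    by_contra h
    push_neg at h
    have := (hupdate k).1 h
    rw [this] at hk
    nlinarith [hpos k]
  -- K is infinite
  have hinf : {k : ℕ | μ (k + 1) = σ * μ k}.Infinite := by
    by_contra h
    rw [Set.not_infinite] at h
    obtain ⟨N, hN⟩ := h.bddAbove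
    have hnotK : ∀ k, N < k → μ (k+1) = μ k := by
      intro k hk
      rcases hstep k with h' | h'
      · exact h'
      · exact absurd (hN h') (not_le.mpr hk)
    have hconst : ∀ m, μ (N + 1 + m) = μ (N + 1) := by
      intro m
      induction m with
      | zero => rfl
      | succ p ih =>
        have : μ (N + 1 + p + 1) = μ (N + 1 + p) := hnotK _ (by omega)
        rw [show N + 1 + (p+1) = N + 1 + p + 1 from rfl, this, ih]
    have hev : ∀ᶠ k in atTop, μ k = μ (N + 1) := by
      filter_upwards [eventually_ge_atTop (N + 1)] with k hk
      have := hconst (k - (N + 1))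
      rwa [Nat.add_sub_cancel' hk] at this
    have htend := hinner (μ (N+1)) (hpos _) hev
    have hsmall : ∀ᶠ k in atTop,
        ‖gradient (fun y => ftil y (μ (N+1))) (x k)‖ < γbar * μ (N+1) := by
      have : (0:ℝ) < γbar * μ (N+1) := mul_pos hγ0 (hpos _)
      exact htend.eventually (eventually_lt_nhds this)
    obtain ⟨k₀, hk₀⟩ := hsmall.exists_forall_of_atTop
    set k := max (N + 1) k₀ with hkdef
    have hk1 : μ k = μ (N+1) := by
      have := hconst (k - (N+1))
      rwa [Nat.add_sub_cancel' (le_max_left _ _)] at this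
    have hk2 : ‖gradient (fun y => ftil y (μ k)) (x (k+1))‖ < γbar * μ k := by
      rw [hk1]
      exact hk₀ (k+1) (le_trans (le_max_right _ _) (Nat.le_succ k))
    exact absurd (hN ((hupdate k).2 hk2)) (not_le.mpr (by omega))
  -- μ tends to 0
  have hbdd : BddBelow (Set.range μ) := ⟨0, by rintro _ ⟨k, rfl⟩; exact (hpos k).le⟩
  have hL : Tendsto μ atTop (nhds (⨅ k, μ k)) := tendsto_atTop_ciInf hanti hbdd
  set L := ⨅ k, μ k with hLdef
  have hL0 : L = 0 := by
    set p : ℕ → Prop := fun k => μ (k + 1) = σ * μ k with hp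
    have hinfp : (setOf p).Infinite := hinf
    have hmono : StrictMono (Nat.nth p) := Nat.nth_strictMono hinfp
    have hta : Tendsto (Nat.nth p) atTop atTop := hmono.tendsto_atTop
    have h1 : Tendsto (fun m => μ (Nat.nth p m)) atTop (nhds L) := hL.comp hta
    have h2 : Tendsto (fun m => μ (Nat.nth p m + 1)) atTop (nhds L) :=
      hL.comp ((tendsto_add_atTop_nat 1).comp hta)
    have h3 : Tendsto (fun m => σ * μ (Nat.nth p m)) atTop (nhds (σ * L)) :=
      h1.const_mul σ
    have heq : (fun m => μ (Nat.nth p m + 1)) = fun m => σ * μ (Nat.nth p m) := by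
      funext m
      exact Nat.nth_mem_of_infinite hinfp m
    rw [heq] at h2
    have : L = σ * L := tendsto_nhds_unique h2 h3
    nlinarith
  rw [hL0] at hL
  refine ⟨hinf, hL, ?_⟩
  have hμinf : Tendsto μ (atTop ⊓ Filter.principal {k : ℕ | μ (k + 1) = σ * μ k})
      (nhds 0) := hL.mono_left inf_le_left
  apply squeeze_zero' ?_ ?_ hμinf
  · exact Eventually.of_forall fun k => norm_nonneg _
  · rw [eventually_inf_principal]
    filter_upwards with k hk
    have h1 := hK k hk
    nlinarith [hpos k, norm_nonneg (gradient (fun y => ftil y (μ k)) (x (k + 1)))]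
end
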